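/- Suppose each fᵢ is Lᵢ-smooth and bounded below by fᵢ^inf, f = (1/n)∑ᵢ fᵢ has infimum f⋆, and Δ = (1/n)∑ᵢ(f⋆ − fᵢ^inf). Then for all x, (1/(τ n²))∑ᵢ (1/qᵢ)‖∇fᵢ(x)‖² ≤ 2A(f(x) − f⋆) + 2AΔ, where A = maxᵢ Lᵢ/(τ n qᵢ). -/

import Mathlib

open MeasureTheory

section Aux

variable {E : Type*} [NormedAddCommGroup E] [InnerProductSpace ℝ E] [CompleteSpace E]

/-- Descent lemma: quadratic upper bound for functions with Lipschitz gradient. -/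
lemma descent_lemma (f : E → ℝ) (L : ℝ) (hL : 0 < L)
    (hdiff : ∀ x, DifferentiableAt ℝ f x)
    (hlip : ∀ x y, ‖gradient f x - gradient f y‖ ≤ L * ‖x - y‖)
    (x y : E) :
    f y ≤ f x + inner ℝ (gradient f x) (y - x) + L / 2 * ‖y - x‖ ^ 2 := by
  set v := y - x with hv
  set g := gradient f x with hg
  set φ : ℝ → ℝ := fun t => f (x + t • v) - t * inner ℝ g v - L * ‖v‖ ^ 2 / 2 * t ^ 2 with hφdef
  have hderiv : ∀ t : ℝ, HasDerivAt φ
      ((inner ℝ (gradient f (x + t • v)) v : ℝ) - inner ℝ g v - L * ‖v‖ ^ 2 * t) t := by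
    intro t
    have hc : HasDerivAt (fun t : ℝ => x + t • v) v t := by
      simpa using ((hasDerivAt_id t).smul_const v).const_add x
    have h1 : HasDerivAt (fun t : ℝ => f (x + t • v))
        ((inner ℝ (gradient f (x + t • v)) v : ℝ)) t := by
      have := ((hdiff (x + t • v)).hasGradientAt.hasFDerivAt).comp_hasDerivAt t hc
      rw [InnerProductSpace.toDual_apply_apply] at this
      exact this
    have h2 : HasDerivAt (fun t : ℝ => t * inner ℝ g v) ((inner ℝ g v : ℝ)) t := by
      simpa using (hasDerivAt_id t).mul_const (inner ℝ g v : ℝ)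
    have h3 : HasDerivAt (fun t : ℝ => L * ‖v‖ ^ 2 / 2 * t ^ 2)
        (L * ‖v‖ ^ 2 * t) t := by
      have := (hasDerivAt_pow 2 t).const_mul (L * ‖v‖ ^ 2 / 2)
      refine this.congr_deriv ?_
      norm_num
      ring
    exact (h1.sub h2).sub h3
  have hanti : AntitoneOn φ (Set.Icc 0 1) := by
    apply antitoneOn_of_deriv_nonpos (convex_Icc 0 1)
    · exact fun t _ => (hderiv t).continuousAt.continuousWithinAt
    · exact fun t _ => (hderiv t).differentiableAt.differentiableWithinAt
    · intro t ht
      rw [interior_Icc] at ht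
      rw [(hderiv t).deriv]
      have h4 : (inner ℝ (gradient f (x + t • v)) v : ℝ) - inner ℝ g v
          = inner ℝ (gradient f (x + t • v) - g) v := by
        rw [inner_sub_left]
      have h5 : (inner ℝ (gradient f (x + t • v) - g) v : ℝ) ≤
          ‖gradient f (x + t • v) - g‖ * ‖v‖ := real_inner_le_norm _ _
      have h6 : ‖gradient f (x + t • v) - g‖ ≤ L * (t * ‖v‖) := by
        have := hlip (x + t • v) x
        simpa [norm_smul, abs_of_pos ht.1] using this
      have hv0 : (0:ℝ) ≤ ‖v‖ := norm_nonneg _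
      nlinarith [h5.trans (by nlinarith : ‖gradient f (x + t • v) - g‖ * ‖v‖ ≤ L * (t * ‖v‖) * ‖v‖)]
  have h01 := hanti (Set.mem_Icc.mpr ⟨le_refl 0, zero_le_one⟩)
      (Set.mem_Icc.mpr ⟨zero_le_one, le_refl 1⟩) zero_le_one
  simp only [hφdef, one_smul, zero_smul, add_zero, zero_mul, mul_zero] at h01
  have hxy : x + v = y := by rw [hv]; abel
  rw [hxy] at h01
  nlinarith [h01]

/-- Gradient-gap inequality. -/
lemma grad_sq_le (f : E → ℝ) (L : ℝ) (hL : 0 < L)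
    (hdiff : ∀ x, DifferentiableAt ℝ f x)
    (hlip : ∀ x y, ‖gradient f x - gradient f y‖ ≤ L * ‖x - y‖)
    (m : ℝ) (hm : ∀ x, m ≤ f x) (x : E) :
    ‖gradient f x‖ ^ 2 ≤ 2 * L * (f x - m) := by
  set g := gradient f x with hg
  have hdes := descent_lemma f L hL hdiff hlip x (x - L⁻¹ • g)
  have h1 : x - L⁻¹ • g - x = -(L⁻¹ • g) := by abel
  rw [h1] at hdes
  have h2 : (inner ℝ g (-(L⁻¹ • g)) : ℝ) = -(L⁻¹ * ‖g‖ ^ 2) := by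
    rw [inner_neg_right, real_inner_smul_right, real_inner_self_eq_norm_sq]
  have h3 : ‖-(L⁻¹ • g)‖ ^ 2 = (L⁻¹) ^ 2 * ‖g‖ ^ 2 := by
    rw [norm_neg, norm_smul]
    simp [abs_of_pos (inv_pos.mpr hL), mul_pow]
  rw [h2, h3] at hdes
  have hm' := hm (x - L⁻¹ • g)
  have heq : f x + -(L⁻¹ * ‖g‖ ^ 2) + L / 2 * (L⁻¹ ^ 2 * ‖g‖ ^ 2)
      = f x - L⁻¹ * ‖g‖ ^ 2 / 2 := by
    field_simp
    ring
  rw [heq] at hdes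
  have h := hm'.trans hdes
  calc ‖g‖ ^ 2 = L * (L⁻¹ * ‖g‖ ^ 2) := by field_simp
    _ ≤ L * (2 * (f x - m)) := mul_le_mul_of_nonneg_left (by linarith) hL.le
    _ = 2 * L * (f x - m) := by ring

end Aux

theorem weighted_gradient_sum_bound {d n : ℕ} (hn : 0 < n)
    (τ : ℕ) (hτ : 1 ≤ τ)
    (q : Fin n → ℝ) (hq : ∀ i, 0 < q i)
    (f : Fin n → EuclideanSpace ℝ (Fin d) → ℝ)
    (L : Fin n → ℝ) (hL : ∀ i, 0 < L i)
    (hdiff : ∀ i x, DifferentiableAt ℝ (f i) x)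
    (hlip : ∀ i x y, ‖gradient (f i) x - gradient (f i) y‖ ≤ L i * ‖x - y‖)
    (finf : Fin n → ℝ) (hbound : ∀ i x, finf i ≤ f i x)
    (fstar : ℝ) (hfstar : ∀ x, fstar ≤ (n : ℝ)⁻¹ * ∑ i, f i x)
    (Δ A : ℝ)
    (hΔ : Δ = (n : ℝ)⁻¹ * ∑ i, (fstar - finf i))
    (hA : A = Finset.univ.sup'
      (Finset.univ_nonempty_iff.mpr ⟨⟨0, hn⟩⟩)
      (fun i : Fin n => L i / (τ * n * q i))) :
    ∀ x, (1 / (τ * (n : ℝ) ^ 2)) * ∑ i, (1 / q i) * ‖gradient (f i) x‖ ^ 2 ≤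
      2 * A * ((n : ℝ)⁻¹ * ∑ i, f i x - fstar) + 2 * A * Δ := by
  intro x
  have hnR : (0:ℝ) < n := by exact_mod_cast hn
  have hτR : (0:ℝ) < τ := by exact_mod_cast lt_of_lt_of_le one_pos hτ
  have key : ∀ i, ‖gradient (f i) x‖ ^ 2 ≤ 2 * L i * (f i x - finf i) := fun i =>
    grad_sq_le (f i) (L i) (hL i) (hdiff i) (hlip i) (finf i) (hbound i) x
  have hAi : ∀ i, L i / (τ * n * q i) ≤ A := by
    intro i
    rw [hA]
    exact Finset.le_sup' (fun i : Fin n => L i / (τ * n * q i)) (Finset.mem_univ i)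
  have step : ∀ i ∈ Finset.univ, (1 / ((τ:ℝ) * (n : ℝ) ^ 2)) * ((1 / q i) * ‖gradient (f i) x‖ ^ 2)
      ≤ 2 * A * ((n:ℝ)⁻¹ * (f i x - finf i)) := by
    intro i _
    have hqi := hq i
    have hLi := hL i
    have hgap : (0:ℝ) ≤ f i x - finf i := sub_nonneg.mpr (hbound i x)
    have s1 : (1 / ((τ:ℝ) * (n : ℝ) ^ 2)) * ((1 / q i) * ‖gradient (f i) x‖ ^ 2)
        ≤ (1 / ((τ:ℝ) * (n : ℝ) ^ 2)) * ((1 / q i) * (2 * L i * (f i x - finf i))) := by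
      apply mul_le_mul_of_nonneg_left
      · exact mul_le_mul_of_nonneg_left (key i) (by positivity)
      · positivity
    have s2 : (1 / ((τ:ℝ) * (n : ℝ) ^ 2)) * ((1 / q i) * (2 * L i * (f i x - finf i)))
        = 2 * (L i / ((τ:ℝ) * n * q i)) * ((n:ℝ)⁻¹ * (f i x - finf i)) := by
      simp only [one_div, div_eq_mul_inv, mul_inv]
      ring
    have s3 : 2 * (L i / ((τ:ℝ) * n * q i)) * ((n:ℝ)⁻¹ * (f i x - finf i))
        ≤ 2 * A * ((n:ℝ)⁻¹ * (f i x - finf i)) := by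
      apply mul_le_mul_of_nonneg_right
      · have := hAi i
        linarith
      · positivity
    rw [s2] at s1
    exact s1.trans s3
  calc (1 / ((τ:ℝ) * (n : ℝ) ^ 2)) * ∑ i, (1 / q i) * ‖gradient (f i) x‖ ^ 2
      = ∑ i, (1 / ((τ:ℝ) * (n : ℝ) ^ 2)) * ((1 / q i) * ‖gradient (f i) x‖ ^ 2) := by
        rw [Finset.mul_sum]
    _ ≤ ∑ i, 2 * A * ((n:ℝ)⁻¹ * (f i x - finf i)) := Finset.sum_le_sum step
    _ = 2 * A * ((n : ℝ)⁻¹ * ∑ i, f i x - fstar) + 2 * A * Δ := by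
        rw [hΔ, ← Finset.mul_sum, ← Finset.mul_sum, Finset.sum_sub_distrib,
          Finset.sum_sub_distrib, Finset.sum_const, Finset.card_univ, Fintype.card_fin,
          nsmul_eq_mul]
        have h : ((n:ℝ))⁻¹ * (n : ℝ) = 1 := inv_mul_cancel₀ (ne_of_gt hnR)
        linear_combination (-(2*A*fstar)) * h
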